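/- Let Q be a finite nonempty set and let 𝔊 be a group of functions Q → Q under composition (a set G closed under composition forming a group, with identity element e that need not be the identity function on Q). If f ∈ G is not equal to the identity element e of 𝔊, then there exists p ∈ Q such that f^n(p) ≠ f^{n+1}(p) for every n ≥ 1. -/

import Mathlib

/-- Let `G` be a group of functions `Q → Q` under composition on a
finite nonempty set `Q`, with identity element `e` (not necessarily the identity
function). If `f ∈ G` and `f ≠ e`, then there is `p ∈ Q` such that `f^n(p) ≠ f^{n+1}(p)`
for every `n ≥ 1`. -/
theorem stmt10 {Q : Type} [Fintype Q] [Nonempty Q]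
    (G : Set (Q → Q)) (e : Q → Q)
    (hcomp : ∀ f ∈ G, ∀ g ∈ G, f ∘ g ∈ G) (he : e ∈ G)
    (hid : ∀ f ∈ G, e ∘ f = f ∧ f ∘ e = f)
    (hinv : ∀ f ∈ G, ∃ g ∈ G, f ∘ g = e ∧ g ∘ f = e)
    (f : Q → Q) (hf : f ∈ G) (hne : f ≠ e) :
    ∃ p : Q, ∀ n : ℕ, 1 ≤ n → f^[n] p ≠ f^[n + 1] p := by
  by_contra h
  push_neg at h
  choose n hn1 hn2 using h
  set N : ℕ := (Finset.univ.sup n) + 1 with hNdef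
  have key : ∀ p, f^[N] p = f^[N + 1] p := by
    intro p
    have hle : n p ≤ N :=
      le_trans (Finset.le_sup (Finset.mem_univ p)) (Nat.le_succ _)
    have main : ∀ m, n p ≤ m → f^[m] p = f^[m + 1] p := by
      intro m hm
      induction m with
      | zero => have := hn1 p; omega
      | succ k ih =>
        rcases Nat.lt_or_ge (n p) (k + 1) with h' | h'
        · have hk := ih (by omega)
          rw [Function.iterate_succ', Function.iterate_succ' f (k + 1)]
          simp only [Function.comp_apply]
          rw [hk]
        · have hk : n p = k + 1 := le_antisymm hm h'
          rw [← hk]; exact hn2 p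
    exact main N hle
  have hiter : ∀ k : ℕ, f^[k + 1] ∈ G := by
    intro k
    induction k with
    | zero => simpa using hf
    | succ k ih => rw [Function.iterate_succ']; exact hcomp f hf _ ih
  have hNG : f^[N] ∈ G := hiter _
  obtain ⟨g, hgG, hg1, hg2⟩ := hinv _ hNG
  have hfe : f^[N + 1] = f^[N] := funext fun p => (key p).symm
  apply hne
  calc f = e ∘ f := ((hid f hf).1).symm
    _ = (g ∘ f^[N]) ∘ f := by rw [hg2]
    _ = g ∘ f^[N + 1] := by rw [Function.comp_assoc, ← Function.iterate_succ]
    _ = g ∘ f^[N] := by rw [hfe]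
    _ = e := hg2
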